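/- Let F : L.Term ℕ → ℕ be any function; define u ≻ v on terms by: F(c[u]) > F(c[v]) for every one-hole context c, and define (u, i) ≽ (v, j) on pairs of a term and a natural number by: u ≻ v, or (u = v and i ≥ j). Then for every n-ary function symbol φ of L, all terms u₁, …, uₙ, v₁, …, vₙ and all natural numbers i₁, …, iₙ, j₁, …, jₙ such that (uₖ, iₖ) ≽ (vₖ, jₖ) for every k, one has (φ(u₁,…,uₙ), 2·(i₁ + ⋯ + iₙ)) ≽ (φ(v₁,…,vₙ), 2·(j₁ + ⋯ + jₙ)). -/

import Mathlib

open FirstOrder FirstOrder.Language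

/-- Number of occurrences of the hole variable `Sum.inr ()` in a term over `ℕ ⊕ Unit`. -/
def holeCount {L : Language} : L.Term (ℕ ⊕ Unit) → ℕ
  | Term.var (Sum.inl _) => 0
  | Term.var (Sum.inr _) => 1
  | Term.func _ ts => ∑ i, holeCount (ts i)

/-- Plugging the term `u` into the hole of a context `c`. -/
def plug {L : Language} (c : L.Term (ℕ ⊕ Unit)) (u : L.Term ℕ) : L.Term ℕ :=
  c.subst (Sum.elim Term.var fun _ => u)

/-- The order on terms induced by a measure `F`: `u ≻ v` iff `F (c[u]) > F (c[v])`
for every one-hole context `c`. -/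
def CtxGt {L : Language} (F : L.Term ℕ → ℕ) (u v : L.Term ℕ) : Prop :=
  ∀ c : L.Term (ℕ ⊕ Unit), holeCount c = 1 → F (plug c u) > F (plug c v)

/-- The lexicographic-style order on pairs of a term and a natural number:
`(u, i) ≽ (v, j)` iff `u ≻ v`, or `u = v` and `i ≥ j`. -/
def PairGe {L : Language} (F : L.Term ℕ → ℕ) (p q : L.Term ℕ × ℕ) : Prop :=
  CtxGt F p.1 q.1 ∨ (p.1 = q.1 ∧ p.2 ≥ q.2)


lemma holeCount_relabel {L : Language} (x : L.Term ℕ) :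
    holeCount (x.relabel Sum.inl) = 0 := by
  induction x with
  | var => rfl
  | func f ts ih => simp [Term.relabel, holeCount, ih]

lemma plug_relabel {L : Language} (x t : L.Term ℕ) :
    plug (x.relabel Sum.inl) t = x := by
  induction x with
  | var => rfl
  | func f ts ih =>
    simp only [plug, Term.relabel, Term.subst] at *
    simp [ih]

/-- Composition of contexts. -/
def compCtx {L : Language} (c d : L.Term (ℕ ⊕ Unit)) : L.Term (ℕ ⊕ Unit) :=
  c.subst (Sum.elim (fun k => Term.var (Sum.inl k)) (fun _ => d))

lemma holeCount_comp {L : Language} (c d : L.Term (ℕ ⊕ Unit)) :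
    holeCount (compCtx c d) = holeCount c * holeCount d := by
  induction c with
  | var v => cases v with
    | inl => simp [compCtx, Term.subst, holeCount]
    | inr => simp [compCtx, Term.subst, holeCount]
  | func f ts ih =>
    simp only [compCtx, Term.subst, holeCount] at *
    simp [ih, Finset.sum_mul]

lemma plug_comp {L : Language} (c d : L.Term (ℕ ⊕ Unit)) (t : L.Term ℕ) :
    plug (compCtx c d) t = plug c (plug d t) := by
  induction c with
  | var v => cases v <;> rfl
  | func f ts ih =>
    simp only [compCtx, plug, Term.subst] at *
    simp [ih]

/-- The context `φ(a₁, …, hole at m, …, aₙ)`. -/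
def funcCtx {L : Language} {n : ℕ} (φ : L.Functions n) (a : Fin n → L.Term ℕ)
    (m : Fin n) : L.Term (ℕ ⊕ Unit) :=
  Term.func φ (fun k => if k = m then Term.var (Sum.inr ()) else (a k).relabel Sum.inl)

lemma holeCount_funcCtx {L : Language} {n : ℕ} (φ : L.Functions n)
    (a : Fin n → L.Term ℕ) (m : Fin n) : holeCount (funcCtx φ a m) = 1 := by
  simp only [funcCtx, holeCount]
  rw [Finset.sum_congr rfl (fun k _ => ?_), Finset.sum_ite_eq' Finset.univ m (fun _ => 1)]
  · simp
  · by_cases hk : k = m <;> simp [hk, holeCount, holeCount_relabel]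

lemma plug_funcCtx {L : Language} {n : ℕ} (φ : L.Functions n) (a : Fin n → L.Term ℕ)
    (m : Fin n) (t : L.Term ℕ) :
    plug (funcCtx φ a m) t = Term.func φ (fun k => if k = m then t else a k) := by
  simp only [funcCtx, plug, Term.subst]
  congr 1
  funext k
  by_cases hk : k = m
  · simp [hk]
  · simpa [hk, plug] using plug_relabel (a k) t

lemma ctxGt_at_coord {L : Language} (F : L.Term ℕ → ℕ) {n : ℕ} (φ : L.Functions n)
    (a : Fin n → L.Term ℕ) (m : Fin n) {x y : L.Term ℕ} (hxy : CtxGt F x y) :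
    ∀ c : L.Term (ℕ ⊕ Unit), holeCount c = 1 →
      F (plug c (Term.func φ (fun k => if k = m then x else a k))) >
      F (plug c (Term.func φ (fun k => if k = m then y else a k))) := by
  intro c hc
  have := hxy (compCtx c (funcCtx φ a m))
    (by rw [holeCount_comp, hc, holeCount_funcCtx, one_mul])
  rwa [plug_comp, plug_comp, plug_funcCtx, plug_funcCtx] at this

/-- The covariant interpretation of an operator `φ` is monotone:
if `(uₖ, iₖ) ≽ (vₖ, jₖ)` for all `k`, then
`(φ(u₁,…,uₙ), 2·(i₁+⋯+iₙ)) ≽ (φ(v₁,…,vₙ), 2·(j₁+⋯+jₙ))`. -/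
theorem pairGe_func_monotone (L : Language) (F : L.Term ℕ → ℕ) {n : ℕ}
    (φ : L.Functions n) (u v : Fin n → L.Term ℕ) (i j : Fin n → ℕ)
    (h : ∀ k : Fin n, PairGe F (u k, i k) (v k, j k)) :
    PairGe F (Term.func φ u, 2 * ∑ k, i k) (Term.func φ v, 2 * ∑ k, j k) := by
  by_cases heq : ∀ k, u k = v k
  · right
    refine ⟨by simp only []; congr 1; exact funext heq, ?_⟩
    have hij : ∀ k, j k ≤ i k := by
      intro k
      rcases h k with h1 | h2
      · exfalso
        have := h1 (Term.var (Sum.inr ())) rfl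
        rw [show plug (Term.var (Sum.inr ())) (u k) = u k from rfl,
          show plug (Term.var (Sum.inr ())) (v k) = v k from rfl, heq k] at this
        exact lt_irrefl _ this
      · exact h2.2
    exact Nat.mul_le_mul_left 2 (Finset.sum_le_sum fun k _ => hij k)
  · push_neg at heq
    obtain ⟨m, hm⟩ := heq
    left
    intro c hc
    -- each coordinate is either equal or strictly greater
    have hstep : ∀ k : Fin n, CtxGt F (u k) (v k) ∨ u k = v k := by
      intro k
      rcases h k with h1 | h2
      · exact Or.inl h1
      · exact Or.inr h2.1
    have hmlt : CtxGt F (u m) (v m) := by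
      rcases hstep m with h1 | h2
      · exact h1
      · exact absurd h2 hm
    -- the interpolating sequence
    set mix : ℕ → Fin n → L.Term ℕ := fun t k => if (k : ℕ) < t then u k else v k with hmix
    have g := fun t => F (plug c (Term.func φ (mix t)))
    have key : ∀ t : ℕ,
        F (plug c (Term.func φ (mix t))) ≤ F (plug c (Term.func φ (mix (t + 1)))) ∧
        (t = (m : ℕ) → F (plug c (Term.func φ (mix t))) < F (plug c (Term.func φ (mix (t + 1))))) := by
      intro t
      by_cases ht : t < n
      · set t' : Fin n := ⟨t, ht⟩ with ht'
        have e1 : mix (t + 1) = fun k => if k = t' then u t' else mix t k := by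
          funext k
          by_cases hk : k = t'
          · subst hk; simp [hmix, ht']
          · have hk' : (k : ℕ) ≠ t := fun hh => hk (Fin.ext hh)
            have : ((k : ℕ) < t + 1) = ((k : ℕ) < t) := by
              apply propext; omega
            simp [hmix, hk, this]
        have e2 : mix t = fun k => if k = t' then v t' else mix t k := by
          funext k
          by_cases hk : k = t'
          · subst hk; simp [hmix, ht']
          · simp [hk]
        rcases hstep t' with hlt | heq2
        · have hgt := ctxGt_at_coord F φ (mix t) t' hlt c hc
          have hgt' : F (plug c (Term.func φ (mix t))) < F (plug c (Term.func φ (mix (t + 1)))) := by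
            rw [e1]
            conv_lhs => rw [e2]
            exact hgt
          exact ⟨le_of_lt hgt', fun _ => hgt'⟩
        · constructor
          · rw [e1, heq2, ← e2]
          · intro htm
            exfalso
            apply hm
            have : t' = m := Fin.ext htm
            rw [← this]; exact heq2
      · have e : mix (t + 1) = mix t := by
          funext k
          have hk : (k : ℕ) < t := lt_of_lt_of_le k.isLt (le_of_not_gt ht)
          simp [hmix, hk, Nat.lt_succ_of_lt hk]
        rw [e]
        exact ⟨le_refl _, fun htm => absurd (htm ▸ m.isLt) ht⟩
    have mono : Monotone (fun t => F (plug c (Term.func φ (mix t)))) :=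
      monotone_nat_of_le_succ fun t => (key t).1
    have h1 : F (plug c (Term.func φ (mix 0))) ≤ F (plug c (Term.func φ (mix m))) :=
      mono (Nat.zero_le _)
    have h2 := (key m).2 rfl
    have h3 : F (plug c (Term.func φ (mix ((m : ℕ) + 1)))) ≤ F (plug c (Term.func φ (mix n))) :=
      mono m.isLt
    have e0 : mix 0 = v := by funext k; simp [hmix]
    have en : mix n = u := by funext k; simp [hmix, k.isLt]
    rw [e0] at h1
    rw [en] at h3
    exact lt_of_le_of_lt h1 (lt_of_lt_of_le h2 h3)
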